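/- Assume 1 − α ≤ R/c < 1/(1−α). Set b* := (√R − √((1−α)·c))²/(α·c) and x* := (R − √((1−α)·R·c))/(α·c). Then: (i) G^{b*}(x*) = 0 and G^{b*}(y) ≤ 0 for all y ≥ 0, so x* is a maximizer of G^{b*} over [0,∞) with nonnegative value; and (ii) for every entrance value b ≥ 0 and every x ≥ 0 such that x maximizes G^b over [0,∞) and G^b(x) ≥ 0, one has x ≤ x*. Hence x* is the maximal incentivizable investment under a static linear-test audit. -/

import Mathlib

/-- `G^b`, the expected-utility function under the static audit with the
truncated-linear test with entrance value `b`. -/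
noncomputable def Gb (α c R b : ℝ) : ℝ → ℝ := fun x =>
  if x < b then -c * x
  else if x < b + 1 then -c * x + R * (x - b) / (1 - α + α * (x - b))
  else R - c * x

set_option maxHeartbeats 1000000 in
/-- Let `α ∈ (0,1)`, `c > 0`, `R > 0` with
`1 − α ≤ R/c < 1/(1−α)`.  Set `b* := (√R − √((1−α)c))²/(αc)` and
`x* := (R − √((1−α)Rc))/(αc)`.  Then: (i) `G^{b*}(x*) = 0` and `G^{b*}(y) ≤ 0`
for all `y ≥ 0`, so `x*` maximizes `G^{b*}` over `[0,∞)` with nonnegative value;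
(ii) for every `b ≥ 0` and every `x ≥ 0` maximizing `G^b` over `[0,∞)` with
`G^b(x) ≥ 0`, one has `x ≤ x*`.  Hence `x*` is the maximal incentivizable
investment under a static linear-test audit. -/
theorem static_incentivizable_investment_mid
    (α c R : ℝ) (hα0 : 0 < α) (hα1 : α < 1) (hc : 0 < c) (hR : 0 < R)
    (hlo : 1 - α ≤ R / c) (hhi : R / c < 1 / (1 - α)) :
    (Gb α c R ((Real.sqrt R - Real.sqrt ((1 - α) * c)) ^ 2 / (α * c))
        ((R - Real.sqrt ((1 - α) * R * c)) / (α * c)) = 0 ∧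
      ∀ y, 0 ≤ y →
        Gb α c R ((Real.sqrt R - Real.sqrt ((1 - α) * c)) ^ 2 / (α * c)) y ≤ 0) ∧
    (∀ b, 0 ≤ b → ∀ x, 0 ≤ x →
      (∀ y, 0 ≤ y → Gb α c R b y ≤ Gb α c R b x) → 0 ≤ Gb α c R b x →
        x ≤ (R - Real.sqrt ((1 - α) * R * c)) / (α * c)) := by
  have hβ : (0:ℝ) < 1 - α := by linarith
  have hαc : (0:ℝ) < α * c := by positivity
  have hs0 : 0 ≤ Real.sqrt ((1 - α) * R * c) := Real.sqrt_nonneg _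
  have hs2 : Real.sqrt ((1 - α) * R * c) ^ 2 = (1 - α) * R * c :=
    Real.sq_sqrt (by positivity)
  have hmul : Real.sqrt R * Real.sqrt ((1 - α) * c) = Real.sqrt ((1 - α) * R * c) := by
    rw [show (1 - α) * R * c = R * ((1 - α) * c) by ring, Real.sqrt_mul hR.le]
  have hbstar : (Real.sqrt R - Real.sqrt ((1 - α) * c)) ^ 2 / (α * c)
      = (R + (1 - α) * c - 2 * Real.sqrt ((1 - α) * R * c)) / (α * c) := by
    rw [sub_sq, Real.sq_sqrt hR.le,
      Real.sq_sqrt (by positivity : (0:ℝ) ≤ (1 - α) * c), mul_assoc, hmul]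
    ring_nf
  rw [hbstar]
  set s : ℝ := Real.sqrt ((1 - α) * R * c) with hs_def
  clear_value s
  clear hmul hbstar hs_def
  have hRc : (1 - α) * c ≤ R := (le_div_iff₀ hc).mp hlo
  have hRc' : (1 - α) * R < c := by
    rw [div_lt_div_iff₀ hc hβ] at hhi; nlinarith
  have hsβc : (1 - α) * c ≤ s := by nlinarith [mul_pos hβ hc]
  have hsc : s < c := by nlinarith
  have hsR : s ≤ R := by nlinarith
  have hspos : 0 < s := lt_of_lt_of_le (mul_pos hβ hc) hsβc
  have h2s : 2 * s ≤ (1 - α) * R + c := by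
    nlinarith [sq_nonneg ((1 - α) * R - c), mul_pos hβ hR]
  have h2s' : 2 * s < (1 - α) * R + c := by
    nlinarith [mul_pos (sub_pos.mpr hRc') (sub_pos.mpr hRc'), mul_pos hβ hR]
  set B : ℝ := (R + (1 - α) * c - 2 * s) / (α * c) with hB_def
  set X : ℝ := (R - s) / (α * c) with hX_def
  set T : ℝ := (s - (1 - α) * c) / (α * c) with hT_def
  clear_value B X T
  have hT0 : 0 ≤ T := by
    rw [hT_def]; exact div_nonneg (by linarith) hαc.le
  have hT2 : T < 1 := by
    rw [hT_def, div_lt_one hαc]; nlinarith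
  have hcB : c * B = (R + (1 - α) * c - 2 * s) / α := by
    rw [hB_def]; field_simp
  have hTcα : c * T * α = s - (1 - α) * c := by
    rw [hT_def]; field_simp
  have hu : 1 - α + α * T = s / c := by
    rw [hT_def]; field_simp; ring
  have hkey : ∀ t : ℝ, 0 ≤ t →
      (R + (1 - α) * c - 2 * s) / α - (R * t / (1 - α + α * t) - c * t)
        = (c * (1 - α + α * t) - s) ^ 2 / (α * c * (1 - α + α * t)) := by
    intro t ht
    have hut : 0 < 1 - α + α * t := by positivity
    field_simp
    linear_combination (-1) * hs2
  have hψle : ∀ t : ℝ, 0 ≤ t →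
      R * t / (1 - α + α * t) - c * t ≤ (R + (1 - α) * c - 2 * s) / α := by
    intro t ht
    have hut : 0 < 1 - α + α * t := by positivity
    have h := hkey t ht
    have h2 := div_nonneg (sq_nonneg (c * (1 - α + α * t) - s))
      (le_of_lt (by positivity : (0:ℝ) < α * c * (1 - α + α * t)))
    linarith
  have hT' : R * T / (s / c) = (R - s) / α := by
    rw [hT_def, div_div_eq_mul_div]
    field_simp
    linear_combination (1) * hs2
  have hψT : R * T / (1 - α + α * T) - c * T = (R + (1 - α) * c - 2 * s) / α := by
    have h := hkey T hT0
    rw [hu] at h ⊢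
    rw [show c * (s / c) - s = 0 by field_simp; ring] at h
    rw [hT'] at h ⊢
    simp at h
    linarith
  constructor
  · constructor
    · -- G^{B}(X) = 0
      have hXBT : X - B = T := by
        rw [hX_def, hB_def, hT_def, div_sub_div_same]; ring_nf
      have hXB : ¬ X < B := by rw [not_lt, ← sub_nonneg, hXBT]; exact hT0
      have hXB1 : X < B + 1 := by
        have : X - B < 1 := by rw [hXBT]; exact hT2
        linarith
      simp only [Gb, if_neg hXB, if_pos hXB1, hXBT]
      have hx : c * X = c * B + c * T := by
        rw [hX_def, hB_def, hT_def]; field_simp; ring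
      rw [hcB] at hx
      linarith [hψT]
    · -- G^{B}(y) ≤ 0 for all y ≥ 0
      intro y hy
      by_cases h1 : y < B
      · simp only [Gb, if_pos h1]; nlinarith
      · by_cases h2 : y < B + 1
        · simp only [Gb, if_neg h1, if_pos h2]
          push_neg at h1
          have ht : 0 ≤ y - B := by linarith
          have h3 := hψle (y - B) ht
          have hx : c * y = c * B + c * (y - B) := by ring
          rw [hcB] at hx
          linarith
        · simp only [Gb, if_neg h1, if_neg h2]
          push_neg at h2
          have h4 := mul_le_mul_of_nonneg_left h2 hc.le
          have h5 : R - c ≤ (R + (1 - α) * c - 2 * s) / α := by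
            rw [le_div_iff₀ hα0]; nlinarith [h2s]
          nlinarith [hcB, h4, h5]
  · -- part (ii)
    intro b hb x hx hmax hpos
    have hX0 : 0 ≤ X := by
      rw [hX_def]; exact div_nonneg (by linarith) hαc.le
    by_cases h1 : x < b
    · simp only [Gb, if_pos h1] at hpos
      rcases hx.eq_or_lt with h|h
      · linarith
      · nlinarith [mul_pos hc h]
    · push_neg at h1
      have hbT0 : (0:ℝ) ≤ b + T := by linarith
      have hbT1 : ¬ b + T < b := by linarith
      have hbT2 : b + T < b + 1 := by linarith
      have hGbT : Gb α c R b (b + T) = -c * (b + T) + (R - s) / α := by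
        simp only [Gb, if_neg hbT1, if_pos hbT2, add_sub_cancel_left, hu, hT']
      have hcmp := hmax (b + T) hbT0
      rw [hGbT] at hcmp
      by_cases h2 : x < b + 1
      · -- middle segment
        simp only [Gb, if_neg (not_lt.mpr h1), if_pos h2] at hcmp hpos
        have ht0 : 0 ≤ x - b := by linarith
        have hut : 0 < 1 - α + α * (x - b) := by positivity
        have step1 : (R - s) / α - c * T
            ≤ R * (x - b) / (1 - α + α * (x - b)) - c * (x - b) := by linarith
        have step2 := mul_le_mul_of_nonneg_right step1 hα0.le
        have step3 : ((R - s) / α - c * T) * α = R - s - c * T * α := by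
          field_simp
        have step4 : ((R + (1 - α) * c - 2 * s) / α) * α = R + (1 - α) * c - 2 * s := by
          field_simp
        have hpsi : (R + (1 - α) * c - 2 * s) / α
            ≤ R * (x - b) / (1 - α + α * (x - b)) - c * (x - b) := by
          by_contra hcon
          push_neg at hcon
          have h8 := mul_lt_mul_of_pos_right hcon hα0
          linarith [step2, step3, step4, hTcα, h8]
        have hkk := hkey (x - b) ht0
        have hden : 0 < α * c * (1 - α + α * (x - b)) := by positivity
        have hsq0 : (c * (1 - α + α * (x - b)) - s) ^ 2 ≤ 0 := by
          by_contra hcon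
          push_neg at hcon
          have := div_pos hcon hden
          linarith
        have hcu : c * (1 - α + α * (x - b)) = s := by
          have h' := le_antisymm hsq0 (sq_nonneg _)
          have h'' := (pow_eq_zero_iff two_ne_zero).mp h'
          linarith
        have hxu : c * x * (1 - α + α * (x - b)) ≤ R * (x - b) := by
          have hcx : c * x ≤ R * (x - b) / (1 - α + α * (x - b)) := by linarith
          rw [le_div_iff₀ hut] at hcx
          linarith
        have h5 : x * s ≤ R * (x - b) := by
          calc x * s = c * x * (1 - α + α * (x - b)) := by rw [← hcu]; ring
            _ ≤ R * (x - b) := hxu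
        have h6 := mul_le_mul_of_nonneg_left h5 hαc.le
        have hact : α * c * (x - b) = s - (1 - α) * c := by
          linear_combination hcu
        have h7 : (α * c) * (R * (x - b)) = R * s - s ^ 2 := by
          linear_combination R * hact + hs2
        have h9 : x * (α * c) * s ≤ (R - s) * s := by linarith [h6, h7]
        rw [hX_def, le_div_iff₀ hαc]
        exact le_of_mul_le_mul_right h9 hspos
      · -- x ≥ b + 1 : impossible
        push_neg at h2
        simp only [Gb, if_neg (not_lt.mpr h1), if_neg (not_lt.mpr h2)] at hcmp
        exfalso
        have hcx := mul_le_mul_of_nonneg_left h2 hc.le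
        have hA : (R - s) / α ≤ R - c + c * T := by linarith [hcmp, hcx]
        have hB' := mul_le_mul_of_nonneg_right hA hα0.le
        have hC : ((R - s) / α) * α = R - s := by field_simp
        linarith [hB', hTcα, h2s']
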